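/- In the abstract setting of a $\Gamma$-graded UFD $A$ with one-dimensional weight spaces and nonzero homogeneous elements $f_1, \dots, f_n$ of linearly independent weights $\mu_1, \dots, \mu_n$ satisfying $A \subset \mathbb{C}[f_1, \dots, f_n, f_1^{-1}, \dots, f_k^{-1}]$: set $Z = \langle \mu_1, \dots, \mu_k \rangle + S\langle \mu_{k+1}, \dots, \mu_n \rangle$ (group generated by the first $k$ weights plus the semigroup generated by the rest). If for every decomposition $\mu_i = \nu_1 + \nu_2$ with $\nu_1, \nu_2$ weights of non-unit homogeneous elements of $A$, at least one of $\nu_1, \nu_2$ does not lie in $Z$, then $f_i$ is irreducible in $A$. -/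

import Mathlib

/-- The set `Z = ⟨μ₁, …, μ_k⟩ + S⟨μ_{k+1}, …, μₙ⟩`: integer combinations of the
weights in which the last `n - k` coefficients are nonnegative. -/
def coneZ {Γ : Type*} [AddCommGroup Γ] (n k : ℕ) (μ : Fin n → Γ) : Set Γ :=
  {γ | ∃ c : Fin n → ℤ, (∀ j : Fin n, k ≤ (j : ℕ) → 0 ≤ c j) ∧ γ = ∑ j, c j • μ j}

private lemma aux_eqadd {L : Type*} [AddCommGroup L] [LinearOrder L] [IsOrderedAddMonoid L] {u u' v v' : L}
    (h1 : u ≤ u') (h2 : v ≤ v') (h3 : u + v = u' + v') : u = u' ∧ v = v' := by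
  have hu : u = u' := by
    by_contra hne
    exact absurd h3 (ne_of_lt (add_lt_add_of_lt_of_le (h1.lt_of_ne hne) h2))
  refine ⟨hu, ?_⟩
  rw [hu] at h3
  exact add_left_cancel h3

private lemma aux_unique {ι R M : Type*} [Ring R] [AddCommGroup M] [Module R M]
    (W : ι → Submodule R M) (hind : iSupIndep W) (h : ι →₀ M) (hm : ∀ γ, h γ ∈ W γ)
    (hs : (h.sum fun _ x => x) = 0) : h = 0 := by
  classical
  ext γ
  by_contra hne
  have hγs : γ ∈ h.support := Finsupp.mem_support_iff.mpr hne
  have hsum : h γ + ∑ δ ∈ h.support.erase γ, h δ = 0 := by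
    rw [Finset.add_sum_erase _ _ hγs]; exact hs
  have h1 : h γ = -∑ δ ∈ h.support.erase γ, h δ := eq_neg_of_add_eq_zero_left hsum
  have h2 : h γ ∈ ⨆ (δ) (_ : δ ≠ γ), W δ := by
    rw [h1]
    refine neg_mem (Submodule.sum_mem _ fun δ hδ => ?_)
    exact Submodule.mem_iSup_of_mem δ
      (Submodule.mem_iSup_of_mem (Finset.ne_of_mem_erase hδ) (hm δ))
  exact hne ((Submodule.disjoint_def.mp (hind γ)) _ (hm γ) h2)

private def auxE {Γ : Type*} [AddCommGroup Γ] {n : ℕ} (μ : Fin n → Γ) (c : Fin n → ℤ) : Γ :=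
  ∑ j, c j • μ j

private lemma auxE_add {Γ : Type*} [AddCommGroup Γ] {n : ℕ} (μ : Fin n → Γ)
    (x y : Fin n → ℤ) : auxE μ (x + y) = auxE μ x + auxE μ y := by
  simp [auxE, add_smul, Finset.sum_add_distrib]

private lemma auxE_sub {Γ : Type*} [AddCommGroup Γ] {n : ℕ} (μ : Fin n → Γ)
    (x y : Fin n → ℤ) : auxE μ (x - y) = auxE μ x - auxE μ y := by
  simp [auxE, sub_smul, Finset.sum_sub_distrib]

/-- Abstract form of assertion 1) of Theorem 7: in a `Γ`-graded UFD `A` with at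
most one-dimensional weight spaces, units being the nonzero constants, given
nonzero homogeneous `f₁, …, fₙ` of linearly independent weights `μ₁, …, μₙ` such
that `A ⊂ ℂ[f₁, …, fₙ, f₁⁻¹, …, f_k⁻¹]`, if for every decomposition
`μᵢ = ν₁ + ν₂` into weights of non-unit homogeneous elements at least one of
`ν₁, ν₂` does not lie in `Z`, then `fᵢ` is irreducible. -/
theorem stmt_14 {A : Type*} [CommRing A] [IsDomain A] [UniqueFactorizationMonoid A]
    [Algebra ℂ A] {Γ : Type*} [AddCommGroup Γ] (W : Γ → Submodule ℂ A)
    (hone : (1 : A) ∈ W 0)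
    (hmul : ∀ (γ δ : Γ) (a b : A), a ∈ W γ → b ∈ W δ → a * b ∈ W (γ + δ))
    (hsum : (⨆ γ, W γ) = ⊤)
    (hind : iSupIndep W)
    (hdim : ∀ (γ : Γ) (a b : A), a ∈ W γ → b ∈ W γ → b ≠ 0 → ∃ c : ℂ, a = c • b)
    (hunit : ∀ a : A, IsUnit a ↔ a ≠ 0 ∧ a ∈ W 0)
    (n k : ℕ) (hkn : k ≤ n) (f : Fin n → A) (μ : Fin n → Γ)
    (hf : ∀ i, f i ∈ W (μ i)) (hne : ∀ i, f i ≠ 0)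
    (hli : ∀ c : Fin n → ℤ, ∑ i, c i • μ i = 0 → c = 0)
    (hlaurent : ∀ a : A, ∃ N : ℕ,
      a * (∏ i ∈ Finset.univ.filter (fun i : Fin n => (i : ℕ) < k), f i) ^ N ∈
        Algebra.adjoin ℂ (Set.range f))
    (i : Fin n)
    (hdec : ∀ ν₁ ν₂ : Γ, μ i = ν₁ + ν₂ → ν₁ ≠ 0 → ν₂ ≠ 0 →
      W ν₁ ≠ ⊥ → W ν₂ ≠ ⊥ → ν₁ ∉ coneZ n k μ ∨ ν₂ ∉ coneZ n k μ) :
    Irreducible (f i) := by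
  classical
  have hEinj : Function.Injective (auxE μ) := by
    intro x y hxy
    have h0 : auxE μ (x - y) = 0 := by rw [auxE_sub, hxy, sub_self]
    have := hli (x - y) h0
    exact sub_eq_zero.mp this
  -- Every weight supporting a nonzero element lies in the cone.
  have hcone : ∀ (γ : Γ) (x : A), x ∈ W γ → x ≠ 0 →
      ∃ c : Fin n → ℤ, (∀ j : Fin n, k ≤ (j : ℕ) → 0 ≤ c j) ∧ γ = auxE μ c := by
    intro γ x hx hx0
    obtain ⟨N, hN⟩ := hlaurent x
    set s : Finset (Fin n) := Finset.univ.filter (fun i : Fin n => (i : ℕ) < k) with hs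
    set σ : Γ := ∑ j ∈ s, μ j with hσ
    have hP : ∀ t : Finset (Fin n), (∏ j ∈ t, f j) ∈ W (∑ j ∈ t, μ j) := by
      intro t
      induction t using Finset.induction_on with
      | empty => simpa using hone
      | @insert j t hj ih =>
        rw [Finset.prod_insert hj, Finset.sum_insert hj]
        exact hmul _ _ _ _ (hf j) ih
    have hPpow : ∀ N : ℕ, ((∏ j ∈ s, f j) ^ N) ∈ W (N • σ) := by
      intro N
      induction N with
      | zero => simpa using hone
      | succ N ih =>
        rw [pow_succ, succ_nsmul]
        exact hmul _ _ _ _ ih (hP s)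
    have hx2 : x * (∏ j ∈ s, f j) ^ N ∈ W (γ + N • σ) := hmul _ _ _ _ hx (hPpow N)
    have hx2ne : x * (∏ j ∈ s, f j) ^ N ≠ 0 :=
      mul_ne_zero hx0 (pow_ne_zero _ (Finset.prod_ne_zero_iff.mpr fun j _ => hne j))
    have hadj : x * (∏ j ∈ s, f j) ^ N ∈
        Submodule.span ℂ (Submonoid.closure (Set.range f) : Set A) := by
      have h' : x * (∏ j ∈ s, f j) ^ N ∈
          Subalgebra.toSubmodule (Algebra.adjoin ℂ (Set.range f)) := hN
      rwa [Algebra.adjoin_eq_span] at h'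
    have hclos : ∀ y ∈ Submonoid.closure (Set.range f),
        ∃ m : Fin n → ℕ, y ∈ W (auxE μ fun j => (m j : ℤ)) := by
      intro y hy
      induction hy using Submonoid.closure_induction with
      | mem y hy =>
        obtain ⟨j, rfl⟩ := hy
        refine ⟨Pi.single j 1, ?_⟩
        have : auxE μ (fun j' => ((Pi.single j 1 : Fin n → ℕ) j' : ℤ)) = μ j := by
          simp [auxE, Pi.single_apply, ite_smul, Finset.sum_ite_eq']
        rw [this]; exact hf j
      | one =>
        refine ⟨0, ?_⟩
        have : auxE μ (fun j' => ((0 : Fin n → ℕ) j' : ℤ)) = 0 := by simp [auxE]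
        rw [this]; exact hone
      | mul y z hy hz ihy ihz =>
        obtain ⟨m1, h1⟩ := ihy
        obtain ⟨m2, h2⟩ := ihz
        refine ⟨m1 + m2, ?_⟩
        have : (fun j => ((m1 + m2) j : ℤ)) =
            (fun j => (m1 j : ℤ)) + (fun j => (m2 j : ℤ)) := by
          funext j; simp
        rw [this, auxE_add]
        exact hmul _ _ _ _ h1 h2
    have hspan : x * (∏ j ∈ s, f j) ^ N ∈
        ⨆ (m : Fin n → ℕ), W (auxE μ fun j => (m j : ℤ)) := by
      refine Submodule.span_le.mpr ?_ hadj
      intro y hy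
      obtain ⟨m, hm⟩ := hclos y hy
      exact Submodule.mem_iSup_of_mem m hm
    have hex : ∃ m : Fin n → ℕ, γ + N • σ = auxE μ fun j => (m j : ℤ) := by
      by_contra hno
      have hle : (⨆ (m : Fin n → ℕ), W (auxE μ fun j => (m j : ℤ))) ≤
          ⨆ (δ) (_ : δ ≠ γ + N • σ), W δ := by
        refine iSup_le fun m => ?_
        exact le_iSup₂_of_le (auxE μ fun j => (m j : ℤ))
          (fun h => hno ⟨m, h.symm⟩) le_rfl
      exact hx2ne (Submodule.disjoint_def.mp (hind (γ + N • σ)) _ hx2 (hle hspan))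
    obtain ⟨m, hm⟩ := hex
    refine ⟨fun j => (m j : ℤ) - (if (j : ℕ) < k then (N : ℤ) else 0), ?_, ?_⟩
    · intro j hj
      have h' : ¬((j : ℕ) < k) := not_lt.mpr hj
      simp [h']
    · have h1 : auxE μ (fun j => if (j : ℕ) < k then (N : ℤ) else 0) = N • σ := by
        rw [hσ, hs]
        simp only [auxE, ite_smul, zero_smul, ← Finset.sum_filter, Finset.smul_sum,
          natCast_zsmul]
      have h2 : γ = (auxE μ fun j => (m j : ℤ)) - N • σ := by rw [← hm]; abel
      have h3 : (fun j => (m j : ℤ) - (if (j : ℕ) < k then (N : ℤ) else 0)) =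
          (fun j : Fin n => (m j : ℤ)) - (fun j : Fin n => if (j : ℕ) < k then (N : ℤ) else 0) := rfl
      rw [h3, auxE_sub, h1, h2]
  -- μ i ≠ 0
  have hμi0 : μ i ≠ 0 := by
    intro h0
    have hz : ∑ j, (if j = i then (1 : ℤ) else 0) • μ j = 0 := by
      simp [ite_smul, Finset.sum_ite_eq', h0]
    have := congrFun (hli _ hz) i
    simp at this
  constructor
  · -- not a unit
    rw [hunit]
    rintro ⟨-, hf0⟩
    refine hne i (Submodule.disjoint_def.mp (hind (μ i)) _ (hf i) ?_)
    exact Submodule.mem_iSup_of_mem 0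
      (Submodule.mem_iSup_of_mem (fun h => hμi0 h.symm) hf0)
  · intro a b hab
    have ha0 : a ≠ 0 := by rintro rfl; exact hne i (by rw [hab, zero_mul])
    have hb0 : b ≠ 0 := by rintro rfl; exact hne i (by rw [hab, mul_zero])
    -- decompose a and b into homogeneous components
    obtain ⟨da, hda, hdas⟩ := (Submodule.mem_iSup_iff_exists_finsupp W a).mp
      (by rw [hsum]; trivial)
    obtain ⟨db, hdb, hdbs⟩ := (Submodule.mem_iSup_iff_exists_finsupp W b).mp
      (by rw [hsum]; trivial)
    have ha' : ∑ γ ∈ da.support, da γ = a := hdas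
    have hb' : ∑ δ ∈ db.support, db δ = b := hdbs
    have hdane : da.support.Nonempty := by
      rw [Finsupp.support_nonempty_iff]
      rintro rfl
      exact ha0 (by rw [← hdas, Finsupp.sum_zero_index])
    have hdbne : db.support.Nonempty := by
      rw [Finsupp.support_nonempty_iff]
      rintro rfl
      exact hb0 (by rw [← hdbs, Finsupp.sum_zero_index])
    -- coefficient functions
    set ca : Γ → (Fin n →₀ ℤ) := fun γ =>
      if h : ∃ c : Fin n → ℤ, γ = auxE μ c then Finsupp.equivFunOnFinite.symm h.choose
      else 0 with hcadef
    have hcaE : ∀ γ : Γ, (∃ c : Fin n → ℤ, γ = auxE μ c) → auxE μ ⇑(ca γ) = γ := by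
      intro γ h
      have hc : ⇑(ca γ) = h.choose := by
        funext j
        simp only [hcadef, dif_pos h, Finsupp.equivFunOnFinite_symm_apply_apply]
      rw [hc]; exact h.choose_spec.symm
    have hcaa : ∀ γ ∈ da.support, auxE μ ⇑(ca γ) = γ := by
      intro γ hγ
      obtain ⟨c, -, hc⟩ := hcone γ (da γ) (hda γ) (Finsupp.mem_support_iff.mp hγ)
      exact hcaE γ ⟨c, hc⟩
    have hcbb : ∀ δ ∈ db.support, auxE μ ⇑(ca δ) = δ := by
      intro δ hδ
      obtain ⟨c, -, hc⟩ := hcone δ (db δ) (hdb δ) (Finsupp.mem_support_iff.mp hδ)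
      exact hcaE δ ⟨c, hc⟩
    set Ca : Finset (Lex (Fin n →₀ ℤ)) := da.support.image (fun γ => toLex (ca γ)) with hCa
    set Cb : Finset (Lex (Fin n →₀ ℤ)) := db.support.image (fun γ => toLex (ca γ)) with hCb
    have hCane : Ca.Nonempty := hdane.image _
    have hCbne : Cb.Nonempty := hdbne.image _
    -- the product finsupp
    set hp : Γ →₀ A :=
      ∑ γ ∈ da.support, ∑ δ ∈ db.support, Finsupp.single (γ + δ) (da γ * db δ) with hhp
    have hpapp : ∀ η, hp η =
        ∑ γ ∈ da.support, ∑ δ ∈ db.support,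
          if γ + δ = η then da γ * db δ else 0 := by
      intro η
      rw [hhp]
      simp only [Finsupp.finset_sum_apply, Finsupp.single_apply]
    have hpW : ∀ η, hp η ∈ W η := by
      intro η
      rw [hpapp]
      refine Submodule.sum_mem _ fun γ _ => Submodule.sum_mem _ fun δ _ => ?_
      split_ifs with h
      · exact h ▸ hmul _ _ _ _ (hda γ) (hdb δ)
      · exact zero_mem _
    have hpsum : (hp.sum fun _ x => x) = a * b := by
      rw [hhp]
      rw [← Finsupp.sum_finset_sum_index (by simp) (by intros; rfl)]
      have : ∀ γ ∈ da.support,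
          ((∑ δ ∈ db.support, Finsupp.single (γ + δ) (da γ * db δ)).sum fun _ x => x)
            = ∑ δ ∈ db.support, da γ * db δ := by
        intro γ _
        rw [← Finsupp.sum_finset_sum_index (by simp) (by intros; rfl)]
        exact Finset.sum_congr rfl fun δ _ => Finsupp.sum_single_index rfl
      rw [Finset.sum_congr rfl this, ← Finset.sum_mul_sum, ha', hb']
    have hsingleW : ∀ η, Finsupp.single (μ i) (f i) η ∈ W η := by
      intro η
      rw [Finsupp.single_apply]
      split_ifs with h
      · exact h ▸ hf i
      · exact zero_mem _
    have hps : hp = Finsupp.single (μ i) (f i) := by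
      have h0 : hp - Finsupp.single (μ i) (f i) = 0 := by
        refine aux_unique W hind _ (fun η => ?_) ?_
        · rw [Finsupp.sub_apply]
          exact sub_mem (hpW η) (hsingleW η)
        · rw [Finsupp.sum_sub_index (by intros; rfl), hpsum,
            Finsupp.sum_single_index rfl, ← hab, sub_self]
      exact sub_eq_zero.mp h0
    -- the key claim
    have key : ∀ (u v : Lex (Fin n →₀ ℤ)), u ∈ Ca → v ∈ Cb →
        ((∀ c ∈ Ca, c ≤ u) ∧ (∀ d ∈ Cb, d ≤ v)) ∨
          ((∀ c ∈ Ca, u ≤ c) ∧ (∀ d ∈ Cb, v ≤ d)) →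
        ∃ γ0 δ0, γ0 ∈ da.support ∧ δ0 ∈ db.support ∧
          toLex (ca γ0) = u ∧ toLex (ca δ0) = v ∧ γ0 + δ0 = μ i := by
      intro u v hu hv hbound
      obtain ⟨γ0, hγ0, hγ0u⟩ := Finset.mem_image.mp hu
      obtain ⟨δ0, hδ0, hδ0v⟩ := Finset.mem_image.mp hv
      refine ⟨γ0, δ0, hγ0, hδ0, hγ0u, hδ0v, ?_⟩
      have houter : ∀ γ ∈ da.support, γ ≠ γ0 → ∀ δ ∈ db.support,
          γ + δ ≠ γ0 + δ0 := by
        intro γ hγ hγne δ hδ hEq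
        have hfun : ca γ + ca δ = ca γ0 + ca δ0 := by
          refine DFunLike.coe_injective (hEinj ?_)
          simp only [Finsupp.coe_add]
          rw [auxE_add, auxE_add, hcaa γ hγ, hcbb δ hδ, hcaa γ0 hγ0, hcbb δ0 hδ0]
          exact hEq
        have h3 : toLex (ca γ) + toLex (ca δ) = toLex (ca γ0) + toLex (ca δ0) := by
          rw [← toLex_add, ← toLex_add, hfun]
        have hres : toLex (ca γ) = toLex (ca γ0) := by
          rcases hbound with ⟨h1, h2⟩ | ⟨h1, h2⟩
          · exact (aux_eqadd (hγ0u ▸ h1 _ (Finset.mem_image_of_mem _ hγ))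
              (hδ0v ▸ h2 _ (Finset.mem_image_of_mem _ hδ)) h3).1
          · exact ((aux_eqadd (hγ0u ▸ h1 _ (Finset.mem_image_of_mem _ hγ))
              (hδ0v ▸ h2 _ (Finset.mem_image_of_mem _ hδ)) h3.symm).1).symm
        have : ca γ = ca γ0 := toLex.injective hres
        exact hγne (by rw [← hcaa γ hγ, this, hcaa γ0 hγ0])
      have hηval : hp (γ0 + δ0) = da γ0 * db δ0 := by
        rw [hpapp]
        rw [Finset.sum_eq_single_of_mem γ0 hγ0 ?_]
        · rw [Finset.sum_eq_single_of_mem δ0 hδ0 ?_]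
          · rw [if_pos rfl]
          · intro δ hδ hδne
            exact if_neg fun h => hδne (add_left_cancel h)
        · intro γ hγ hγne
          refine Finset.sum_eq_zero fun δ hδ => ?_
          exact if_neg (houter γ hγ hγne δ hδ)
      have hη0 : hp (γ0 + δ0) ≠ 0 := by
        rw [hηval]
        exact mul_ne_zero (Finsupp.mem_support_iff.mp hγ0) (Finsupp.mem_support_iff.mp hδ0)
      rw [hps, Finsupp.single_apply] at hη0
      by_contra hcon
      rw [if_neg (fun h => hcon h.symm)] at hη0
      exact hη0 rfl
    obtain ⟨γ1, δ1, hγ1, hδ1, hγ1u, hδ1v, hsum1⟩ :=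
      key (Ca.max' hCane) (Cb.max' hCbne) (Ca.max'_mem hCane) (Cb.max'_mem hCbne)
        (Or.inl ⟨fun c hc => Ca.le_max' c hc, fun d hd => Cb.le_max' d hd⟩)
    obtain ⟨γ2, δ2, hγ2, hδ2, hγ2u, hδ2v, hsum2⟩ :=
      key (Ca.min' hCane) (Cb.min' hCbne) (Ca.min'_mem hCane) (Cb.min'_mem hCbne)
        (Or.inr ⟨fun c hc => Ca.min'_le c hc, fun d hd => Cb.min'_le d hd⟩)
    -- max = min in both coordinates
    have heq12 : ca γ2 + ca δ2 = ca γ1 + ca δ1 := by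
      refine DFunLike.coe_injective (hEinj ?_)
      simp only [Finsupp.coe_add]
      rw [auxE_add, auxE_add, hcaa γ1 hγ1, hcbb δ1 hδ1, hcaa γ2 hγ2, hcbb δ2 hδ2]
      rw [hsum1, hsum2]
    have h3 : Ca.min' hCane + Cb.min' hCbne = Ca.max' hCane + Cb.max' hCbne := by
      rw [← hγ1u, ← hδ1v, ← hγ2u, ← hδ2v, ← toLex_add, ← toLex_add, heq12]
    have hmm := aux_eqadd (Ca.min'_le _ (Ca.max'_mem hCane))
      (Cb.min'_le _ (Cb.max'_mem hCbne)) h3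
    -- supports are singletons
    have hsupa : da.support = {γ1} := by
      apply Finset.eq_singleton_iff_nonempty_unique_mem.mpr
      refine ⟨hdane, fun γ hγ => ?_⟩
      have hle1 : toLex (ca γ) ≤ Ca.max' hCane :=
        Ca.le_max' _ (Finset.mem_image_of_mem _ hγ)
      have hle2 : Ca.min' hCane ≤ toLex (ca γ) :=
        Ca.min'_le _ (Finset.mem_image_of_mem _ hγ)
      have : toLex (ca γ) = toLex (ca γ1) := by
        rw [hγ1u]
        exact le_antisymm hle1 (hmm.1 ▸ hle2)
      rw [← hcaa γ hγ, toLex.injective this, hcaa γ1 hγ1]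
    have hsupb : db.support = {δ1} := by
      apply Finset.eq_singleton_iff_nonempty_unique_mem.mpr
      refine ⟨hdbne, fun δ hδ => ?_⟩
      have hle1 : toLex (ca δ) ≤ Cb.max' hCbne :=
        Cb.le_max' _ (Finset.mem_image_of_mem _ hδ)
      have hle2 : Cb.min' hCbne ≤ toLex (ca δ) :=
        Cb.min'_le _ (Finset.mem_image_of_mem _ hδ)
      have : toLex (ca δ) = toLex (ca δ1) := by
        rw [hδ1v]
        exact le_antisymm hle1 (hmm.2 ▸ hle2)
      rw [← hcbb δ hδ, toLex.injective this, hcbb δ1 hδ1]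
    have haW : a ∈ W γ1 := by
      rw [← ha', hsupa, Finset.sum_singleton]
      exact hda γ1
    have hbW : b ∈ W δ1 := by
      rw [← hb', hsupb, Finset.sum_singleton]
      exact hdb δ1
    -- conclude
    by_cases hγ10 : γ1 = 0
    · left; rw [hunit]; exact ⟨ha0, hγ10 ▸ haW⟩
    by_cases hδ10 : δ1 = 0
    · right; rw [hunit]; exact ⟨hb0, hδ10 ▸ hbW⟩
    exfalso
    have hWa : W γ1 ≠ ⊥ := fun h => ha0 (by
      have := haW; rw [h, Submodule.mem_bot] at this; exact this)
    have hWb : W δ1 ≠ ⊥ := fun h => hb0 (by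
      have := hbW; rw [h, Submodule.mem_bot] at this; exact this)
    rcases hdec γ1 δ1 hsum1.symm hγ10 hδ10 hWa hWb with h | h
    · obtain ⟨c, hc1, hc2⟩ := hcone γ1 a haW ha0
      exact h ⟨c, hc1, hc2⟩
    · obtain ⟨c, hc1, hc2⟩ := hcone δ1 b hbW hb0
      exact h ⟨c, hc1, hc2⟩
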